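/- arXiv:0801.0650 — 2 statements merged into one kernel-verified Lean document; each statement's English description precedes it below -/
import Mathlib

section
/- Let n ≥ 1 and N = n(n+1)/2, and let {Q̂_α}_{α=1}^N be any orthonormal basis of SM(n). Then for any index α ∈ {1,...,N} and any subset J ⊆ {1,...,N}, Σ_{β∈J} (‖[Q̂_α, Q̂_β]‖² − 1) ≤ 1. -/
open Matrix BigOperators
set_option maxHeartbeats 1000000

/-- The squared Frobenius norm: sum of squares of the entries. -/
noncomputable def frobSq {n : ℕ} (A : Matrix (Fin n) (Fin n) ℝ) : ℝ :=
  ∑ i, ∑ j, (A i j) ^ 2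

/-- The commutator of two matrices. -/
def mcomm {n : ℕ} (A B : Matrix (Fin n) (Fin n) ℝ) : Matrix (Fin n) (Fin n) ℝ :=
  A * B - B * A

section aux

open Finset

/-- Key scalar inequality: if `∑ dᵢ² = 1` then `∑_{i<j} ((dᵢ-dⱼ)² - 1)₊ ≤ 1`. -/
lemma star_ineq {n : ℕ} (d : Fin n → ℝ) (hd : ∑ i, d i ^ 2 = 1) :
    ∑ p ∈ Finset.univ.filter (fun p : Fin n × Fin n => p.1 < p.2),
      max ((d p.1 - d p.2) ^ 2 - 1) 0 ≤ 1 := by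
  classical
  set s : Fin n × Fin n → ℝ := fun p => d p.1 - d p.2 with hs
  set P : Finset (Fin n × Fin n) :=
    Finset.univ.filter (fun p : Fin n × Fin n => p.1 < p.2 ∧ 1 < (d p.1 - d p.2) ^ 2) with hP
  set S : ℝ := ∑ p ∈ P, s p ^ 2 with hSdef
  set m : ℕ := P.card with hm
  have hmemP : ∀ p : Fin n × Fin n, p ∈ P → p.1 < p.2 ∧ 1 < (d p.1 - d p.2) ^ 2 := by
    intro p hp; rw [hP, Finset.mem_filter] at hp; exact hp.2
  -- LHS = S - m
  have hLHS : ∑ p ∈ Finset.univ.filter (fun p : Fin n × Fin n => p.1 < p.2),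
      max ((d p.1 - d p.2) ^ 2 - 1) 0 = S - m := by
    have h1 : ∑ p ∈ Finset.univ.filter (fun p : Fin n × Fin n => p.1 < p.2),
        max ((d p.1 - d p.2) ^ 2 - 1) 0
        = ∑ p ∈ Finset.univ.filter (fun p : Fin n × Fin n => p.1 < p.2),
          (if 1 < (d p.1 - d p.2) ^ 2 then ((d p.1 - d p.2) ^ 2 - 1) else 0) := by
      refine Finset.sum_congr rfl fun p _ => ?_
      split_ifs with h
      · exact max_eq_left (by linarith)
      · exact max_eq_right (by push_neg at h; linarith)
    have h2 : ∀ p : Fin n × Fin n,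
        (if p.1 < p.2 then (if 1 < (d p.1 - d p.2) ^ 2 then ((d p.1 - d p.2) ^ 2 - 1) else 0)
          else 0)
        = (if p.1 < p.2 ∧ 1 < (d p.1 - d p.2) ^ 2 then ((d p.1 - d p.2) ^ 2 - 1) else 0) := by
      intro p; split_ifs <;> tauto
    rw [h1, Finset.sum_filter, Finset.sum_congr rfl (fun p _ => h2 p), ← Finset.sum_filter,
      ← hP]
    rw [Finset.sum_sub_distrib, Finset.sum_const, nsmul_eq_mul, mul_one, hSdef, ← hm]
  rw [hLHS]
  suffices hmain : S ≤ m + 1 by linarith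
  set σ : Fin n → (Fin n × Fin n) → ℝ :=
    fun i p => (if p.1 = i then 1 else 0) - (if p.2 = i then 1 else 0) with hσ
  set c : Fin n → ℝ := fun i => ∑ p ∈ P, σ i p * s p with hc
  set k : (Fin n × Fin n) → (Fin n × Fin n) → ℝ := fun p q => ∑ i, σ i p * σ i q with hkdef
  -- step 1 : ∑ i, d i * c i = S
  have h1 : ∑ i, d i * c i = S := by
    rw [hc]
    simp only [Finset.mul_sum]
    rw [Finset.sum_comm]
    refine Finset.sum_congr rfl fun p _ => ?_
    have e : ∀ i, d i * (σ i p * s p)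
        = (if p.1 = i then d i * s p else 0) - (if p.2 = i then d i * s p else 0) := by
      intro i
      by_cases h1 : p.1 = i <;> by_cases h2 : p.2 = i <;> simp [hσ, h1, h2]
    rw [Finset.sum_congr rfl (fun i _ => e i), Finset.sum_sub_distrib]
    simp only [Finset.sum_ite_eq, Finset.mem_univ, if_true]
    rw [hs]; ring
  -- step 2 : Cauchy–Schwarz
  have h2 : S ^ 2 ≤ (∑ i, d i ^ 2) * (∑ i, c i ^ 2) := by
    rw [← h1]
    exact Finset.sum_mul_sq_le_sq_mul_sq Finset.univ d c
  have e1 : ∀ (a b : Fin n), ∑ i, (if a = i then (1:ℝ) else 0) * (if b = i then 1 else 0)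
      = if a = b then 1 else 0 := by
    intro a b
    simp only [ite_mul, one_mul, zero_mul]
    rw [Finset.sum_ite_eq, if_pos (Finset.mem_univ a)]
    by_cases h : a = b <;> simp [h, eq_comm]
  have hk : ∀ p q : Fin n × Fin n, k p q
      = (if p.1 = q.1 then (1:ℝ) else 0) + (if p.2 = q.2 then 1 else 0)
        - (if p.1 = q.2 then 1 else 0) - (if p.2 = q.1 then 1 else 0) := by
    intro p q
    have e : ∀ i, σ i p * σ i q
        = (if p.1 = i then (1:ℝ) else 0) * (if q.1 = i then 1 else 0)
          + (if p.2 = i then (1:ℝ) else 0) * (if q.2 = i then 1 else 0)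
          - (if p.1 = i then (1:ℝ) else 0) * (if q.2 = i then 1 else 0)
          - (if p.2 = i then (1:ℝ) else 0) * (if q.1 = i then 1 else 0) := by
      intro i; rw [hσ]; ring
    simp only [hkdef]
    rw [Finset.sum_congr rfl (fun i _ => e i)]
    rw [Finset.sum_sub_distrib, Finset.sum_sub_distrib, Finset.sum_add_distrib, e1, e1, e1, e1]
  -- step 3 : ∑ c² ≤ (m+1) S
  have h3 : ∑ i, c i ^ 2 ≤ (m + 1) * S := by
    have hc2 : ∑ i, c i ^ 2 = ∑ p ∈ P, ∑ q ∈ P, s p * s q * k p q := by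
      have e2 : ∀ i, c i ^ 2 = ∑ p ∈ P, ∑ q ∈ P, (σ i p * s p) * (σ i q * s q) := by
        intro i; rw [hc, sq, Finset.sum_mul_sum]
      rw [Finset.sum_congr rfl (fun i _ => e2 i), Finset.sum_comm]
      refine Finset.sum_congr rfl fun p _ => ?_
      rw [Finset.sum_comm]
      refine Finset.sum_congr rfl fun q _ => ?_
      rw [hkdef, Finset.mul_sum]
      exact Finset.sum_congr rfl fun i _ => by ring
    have hbound : ∀ p ∈ P, ∀ q ∈ P, s p * s q * k p q
        ≤ |s p| * |s q| + (if p = q then s p ^ 2 else 0) := by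
      intro p hp q hq
      obtain ⟨hp1, hp2⟩ := hmemP p hp
      obtain ⟨hq1, hq2⟩ := hmemP q hq
      by_cases hpq : p = q
      · subst hpq
        have hne : ¬ (p.1 = p.2) := ne_of_lt hp1
        have hk2 : k p p = 2 := by
          rw [hk, if_pos rfl, if_pos rfl, if_neg hne, if_neg (fun h => hne h.symm)]
          norm_num
        rw [hk2, if_pos rfl]
        have habs := abs_mul_abs_self (s p)
        nlinarith [habs]
      · rw [if_neg hpq, add_zero]
        have habs : |k p q| ≤ 1 := by
          have hv1 : (p.1 : ℕ) < (p.2 : ℕ) := hp1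
          have hv2 : (q.1 : ℕ) < (q.2 : ℕ) := hq1
          have hv3 : (p.1 : ℕ) ≠ (q.1 : ℕ) ∨ (p.2 : ℕ) ≠ (q.2 : ℕ) := by
            by_contra h
            push_neg at h
            exact hpq (Prod.ext (Fin.ext h.1) (Fin.ext h.2))
          rw [hk]
          simp only [Fin.ext_iff]
          rcases hv3 with h | h <;>
            split_ifs <;> (try (exfalso; omega)) <;> norm_num
        have h6 : s p * s q * k p q ≤ |s p| * |s q| * |k p q| := by
          rw [← abs_mul, ← abs_mul]
          exact le_abs_self _
        have h7 : |s p| * |s q| * |k p q| ≤ |s p| * |s q| * 1 :=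
          mul_le_mul_of_nonneg_left habs (by positivity)
        linarith
    have hrow : ∀ p ∈ P, ∑ q ∈ P, (|s p| * |s q| + if p = q then s p ^ 2 else 0)
        = |s p| * (∑ q ∈ P, |s q|) + s p ^ 2 := by
      intro p hp
      rw [Finset.sum_add_distrib, ← Finset.mul_sum, Finset.sum_ite_eq, if_pos hp]
    have hT : (∑ p ∈ P, |s p|) ^ 2 ≤ (m : ℝ) * S := by
      have h7 := sq_sum_le_card_mul_sum_sq (s := P) (f := fun p => |s p|)
      simp only [sq_abs] at h7
      rw [hSdef, hm]
      exact_mod_cast h7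
    calc ∑ i, c i ^ 2 = ∑ p ∈ P, ∑ q ∈ P, s p * s q * k p q := hc2
      _ ≤ ∑ p ∈ P, ∑ q ∈ P, (|s p| * |s q| + if p = q then s p ^ 2 else 0) :=
          Finset.sum_le_sum fun p hp => Finset.sum_le_sum fun q hq => hbound p hp q hq
      _ = ∑ p ∈ P, (|s p| * (∑ q ∈ P, |s q|) + s p ^ 2) :=
          Finset.sum_congr rfl hrow
      _ = (∑ p ∈ P, |s p|) ^ 2 + S := by
          rw [Finset.sum_add_distrib, ← Finset.sum_mul, sq, hSdef]
      _ ≤ (m : ℝ) * S + S := by linarith [hT]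
      _ = (m + 1) * S := by ring
  have hS0 : 0 ≤ S := Finset.sum_nonneg fun p _ => sq_nonneg _
  rcases eq_or_lt_of_le hS0 with hS | hS
  · rw [← hS]; positivity
  · have hfin : S ^ 2 ≤ (m + 1) * S := by rw [hd] at h2; linarith [h2, h3]
    nlinarith [hfin, hS]

/-- Bessel's inequality, hand-rolled for finite families of real vectors. -/
lemma bessel_aux {ι κ : Type*} [Fintype ι] [DecidableEq κ] (J : Finset κ)
    (v : κ → ι → ℝ) (x : ι → ℝ)
    (h : ∀ β ∈ J, ∀ γ ∈ J, (∑ i, v β i * v γ i) = if β = γ then 1 else 0) :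
    ∑ β ∈ J, (∑ i, x i * v β i) ^ 2 ≤ ∑ i, x i ^ 2 := by
  classical
  set c : κ → ℝ := fun β => ∑ i, x i * v β i with hc
  have key : 0 ≤ ∑ i, (x i - ∑ β ∈ J, c β * v β i) ^ 2 :=
    Finset.sum_nonneg fun i _ => sq_nonneg _
  have hmid : ∑ i, x i * (∑ β ∈ J, c β * v β i) = ∑ β ∈ J, c β ^ 2 := by
    have e : ∀ i, x i * (∑ β ∈ J, c β * v β i) = ∑ β ∈ J, c β * (x i * v β i) := by
      intro i; rw [Finset.mul_sum]; exact Finset.sum_congr rfl fun β _ => by ring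
    rw [Finset.sum_congr rfl fun i _ => e i, Finset.sum_comm]
    refine Finset.sum_congr rfl fun β _ => ?_
    rw [← Finset.mul_sum]
    simp only [hc]
    rw [sq]
  have hlast : ∑ i, (∑ β ∈ J, c β * v β i) ^ 2
      = ∑ β ∈ J, ∑ γ ∈ J, c β * c γ * (∑ i, v β i * v γ i) := by
    have e : ∀ i, (∑ β ∈ J, c β * v β i) ^ 2
        = ∑ β ∈ J, ∑ γ ∈ J, (c β * c γ) * (v β i * v γ i) := by
      intro i; rw [sq, Finset.sum_mul_sum]
      exact Finset.sum_congr rfl fun β _ => Finset.sum_congr rfl fun γ _ => by ring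
    rw [Finset.sum_congr rfl fun i _ => e i, Finset.sum_comm]
    refine Finset.sum_congr rfl fun β _ => ?_
    rw [Finset.sum_comm]
    refine Finset.sum_congr rfl fun γ _ => (Finset.mul_sum _ _ _).symm
  have diag : ∑ β ∈ J, ∑ γ ∈ J, c β * c γ * (∑ i, v β i * v γ i) = ∑ β ∈ J, c β ^ 2 := by
    refine Finset.sum_congr rfl fun β hβ => ?_
    have e2 : ∀ γ ∈ J, c β * c γ * (∑ i, v β i * v γ i)
        = if β = γ then c β ^ 2 else 0 := by
      intro γ hγ
      rw [h β hβ γ hγ]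
      split_ifs with hbg
      · subst hbg; ring
      · ring
    rw [Finset.sum_congr rfl e2, Finset.sum_ite_eq, if_pos hβ]
  have expand : ∑ i, (x i - ∑ β ∈ J, c β * v β i) ^ 2
      = ∑ i, x i ^ 2 - 2 * (∑ β ∈ J, c β ^ 2)
        + ∑ β ∈ J, ∑ γ ∈ J, c β * c γ * (∑ i, v β i * v γ i) := by
    calc ∑ i, (x i - ∑ β ∈ J, c β * v β i) ^ 2
        = ∑ i, (x i ^ 2 - 2 * (x i * (∑ β ∈ J, c β * v β i))
            + (∑ β ∈ J, c β * v β i) ^ 2) := Finset.sum_congr rfl fun i _ => by ring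
      _ = ∑ i, x i ^ 2 - ∑ i, 2 * (x i * (∑ β ∈ J, c β * v β i))
            + ∑ i, (∑ β ∈ J, c β * v β i) ^ 2 := by
          rw [Finset.sum_add_distrib, Finset.sum_sub_distrib]
      _ = ∑ i, x i ^ 2 - 2 * (∑ β ∈ J, c β ^ 2)
            + ∑ β ∈ J, ∑ γ ∈ J, c β * c γ * (∑ i, v β i * v γ i) := by
          rw [← Finset.mul_sum, hmid, hlast]
  rw [expand, diag] at key
  have : ∑ β ∈ J, c β ^ 2 ≤ ∑ i, x i ^ 2 := by linarith
  exact this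

lemma ip_eq_trace {n : ℕ} (X Y : Matrix (Fin n) (Fin n) ℝ) :
    (∑ i, ∑ j, X i j * Y i j) = Matrix.trace (Xᵀ * Y) := by
  rw [Matrix.trace]
  simp only [Matrix.diag_apply, Matrix.mul_apply, Matrix.transpose_apply]
  exact Finset.sum_comm

lemma frobSq_eq_trace {n : ℕ} (X : Matrix (Fin n) (Fin n) ℝ) :
    frobSq X = Matrix.trace (Xᵀ * X) := by
  rw [frobSq, ← ip_eq_trace]
  exact Finset.sum_congr rfl fun i _ => Finset.sum_congr rfl fun j _ => sq (X i j)

lemma trace_conj {n : ℕ} (U M : Matrix (Fin n) (Fin n) ℝ) (hU1 : Uᵀ * U = 1) :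
    Matrix.trace (U * M * Uᵀ) = Matrix.trace M := by
  rw [Matrix.trace_mul_comm, ← Matrix.mul_assoc, hU1, Matrix.one_mul]

lemma frobSq_conj {n : ℕ} (U M : Matrix (Fin n) (Fin n) ℝ) (hU1 : Uᵀ * U = 1) :
    frobSq (U * M * Uᵀ) = frobSq M := by
  rw [frobSq_eq_trace, frobSq_eq_trace]
  have ht : (U * M * Uᵀ)ᵀ = U * Mᵀ * Uᵀ := by
    simp [Matrix.transpose_mul, Matrix.mul_assoc]
  rw [ht]
  have h2 : U * Mᵀ * Uᵀ * (U * M * Uᵀ) = U * (Mᵀ * M) * Uᵀ := by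
    calc U * Mᵀ * Uᵀ * (U * M * Uᵀ) = U * Mᵀ * (Uᵀ * U) * M * Uᵀ := by
          simp only [Matrix.mul_assoc]
      _ = U * (Mᵀ * M) * Uᵀ := by rw [hU1]; simp only [Matrix.mul_assoc, Matrix.mul_one]
  rw [h2, trace_conj _ _ hU1]

lemma ip_conj {n : ℕ} (U X Y : Matrix (Fin n) (Fin n) ℝ) (hU1 : Uᵀ * U = 1)
    (hU2 : U * Uᵀ = 1) :
    (∑ i, ∑ j, (Uᵀ * X * U) i j * (Uᵀ * Y * U) i j) = ∑ i, ∑ j, X i j * Y i j := by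
  rw [ip_eq_trace, ip_eq_trace]
  have ht : (Uᵀ * X * U)ᵀ = Uᵀ * Xᵀ * U := by
    simp [Matrix.transpose_mul, Matrix.mul_assoc]
  rw [ht]
  have h2 : Uᵀ * Xᵀ * U * (Uᵀ * Y * U) = Uᵀ * (Xᵀ * Y) * U := by
    calc Uᵀ * Xᵀ * U * (Uᵀ * Y * U) = Uᵀ * Xᵀ * (U * Uᵀ) * Y * U := by
          simp only [Matrix.mul_assoc]
      _ = Uᵀ * (Xᵀ * Y) * U := by rw [hU2]; simp only [Matrix.mul_assoc, Matrix.mul_one]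
  rw [h2, Matrix.trace_mul_comm, ← Matrix.mul_assoc, hU2, Matrix.one_mul]

end aux

/-- Lemma 2.3: for any orthonormal basis `{Q̂_α}` of the space of `n×n` real symmetric
matrices (`N = n(n+1)/2`), any index `α` and any subset `J` of indices,
`∑_{β∈J} (‖[Q̂_α, Q̂_β]‖² − 1) ≤ 1`. -/
theorem commutator_gap_sum_le_one (n N : ℕ) (hn : 1 ≤ n) (hN : N = n * (n + 1) / 2)
    (Q : Fin N → Matrix (Fin n) (Fin n) ℝ) (hsymm : ∀ α, (Q α).IsSymm)
    (horth : ∀ α β, (∑ i, ∑ j, Q α i j * Q β i j) = if α = β then 1 else 0)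
    (α : Fin N) (J : Finset (Fin N)) :
    ∑ β ∈ J, (frobSq (mcomm (Q α) (Q β)) - 1) ≤ 1 := by
  classical
  have hA : (Q α).IsHermitian := by
    rw [Matrix.IsHermitian, Matrix.conjTranspose_eq_transpose_of_trivial]
    exact hsymm α
  obtain ⟨d, hd⟩ : ∃ d' : Fin n → ℝ, d' = hA.eigenvalues := ⟨_, rfl⟩
  obtain ⟨U, hUdef⟩ : ∃ U' : Matrix (Fin n) (Fin n) ℝ,
      U' = (hA.eigenvectorUnitary : Matrix (Fin n) (Fin n) ℝ) := ⟨_, rfl⟩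
  have hstar : star U = Uᵀ := by
    rw [Matrix.star_eq_conjTranspose, Matrix.conjTranspose_eq_transpose_of_trivial]
  have hU2 : U * Uᵀ = 1 := by
    rw [← hstar, hUdef]; exact (Matrix.mem_unitaryGroup_iff).mp hA.eigenvectorUnitary.2
  have hU1 : Uᵀ * U = 1 := by
    rw [← hstar, hUdef]; exact (Matrix.mem_unitaryGroup_iff').mp hA.eigenvectorUnitary.2
  have hspec : Q α = U * Matrix.diagonal d * Uᵀ := by
    rw [← hstar]
    have h := hA.spectral_theorem
    rw [Unitary.conjStarAlgAut_apply] at h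
    rw [← hUdef] at h
    rw [hd]
    exact h
  obtain ⟨B, hBdef⟩ : ∃ B' : Fin N → Matrix (Fin n) (Fin n) ℝ,
      B' = fun β => Uᵀ * Q β * U := ⟨_, rfl⟩
  have hQeq : ∀ β, Q β = U * B β * Uᵀ := by
    intro β
    simp only [hBdef]
    calc Q β = (U * Uᵀ) * Q β * (U * Uᵀ) := by rw [hU2]; simp
      _ = U * (Uᵀ * Q β * U) * Uᵀ := by simp only [Matrix.mul_assoc]
  have hBsymm : ∀ β, (B β)ᵀ = B β := by
    intro β
    simp only [hBdef]
    rw [Matrix.transpose_mul, Matrix.transpose_mul, Matrix.transpose_transpose,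
      (hsymm β).eq, Matrix.mul_assoc]
  have hBsymm' : ∀ β i j, B β j i = B β i j := by
    intro β i j
    have h := congrFun (congrFun (hBsymm β) i) j
    simpa [Matrix.transpose_apply] using h
  have hBorth : ∀ β γ, (∑ i, ∑ j, B β i j * B γ i j) = if β = γ then 1 else 0 := by
    intro β γ
    simp only [hBdef]
    rw [ip_conj _ _ _ hU1 hU2]
    exact horth β γ
  have hd2 : ∑ i, d i ^ 2 = 1 := by
    have h1 : frobSq (Q α) = 1 := by
      have h := horth α α
      rw [if_pos rfl] at h
      rw [frobSq, ← h]
      exact Finset.sum_congr rfl fun i _ => Finset.sum_congr rfl fun j _ => sq (Q α i j)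
    have h2 : frobSq (Q α) = frobSq (Matrix.diagonal d) := by
      rw [hspec, frobSq_conj _ _ hU1]
    have h3 : frobSq (Matrix.diagonal d) = ∑ i, d i ^ 2 := by
      rw [frobSq]
      refine Finset.sum_congr rfl fun i _ => ?_
      have e : ∀ j, (Matrix.diagonal d i j) ^ 2 = if i = j then d i ^ 2 else 0 := by
        intro j
        rw [Matrix.diagonal_apply]
        split_ifs with h
        · subst h; rfl
        · norm_num
      rw [Finset.sum_congr rfl fun j _ => e j, Finset.sum_ite_eq,
        if_pos (Finset.mem_univ i)]
    rw [h2, h3] at h1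
    exact h1
  have hUX : ∀ X : Matrix (Fin n) (Fin n) ℝ, Uᵀ * (U * X) = X := by
    intro X; rw [← Matrix.mul_assoc, hU1, Matrix.one_mul]
  have hcommB : ∀ β, frobSq (mcomm (Q α) (Q β))
      = ∑ i, ∑ j, (d i - d j) ^ 2 * (B β i j) ^ 2 := by
    intro β
    have hm : mcomm (Q α) (Q β) = U * mcomm (Matrix.diagonal d) (B β) * Uᵀ := by
      rw [mcomm, mcomm, hspec, hQeq β, Matrix.mul_sub, Matrix.sub_mul]
      congr 1
      · simp only [Matrix.mul_assoc]
        rw [hUX]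
      · simp only [Matrix.mul_assoc]
        rw [hUX]
    rw [hm, frobSq_conj _ _ hU1, frobSq]
    refine Finset.sum_congr rfl fun i _ => Finset.sum_congr rfl fun j _ => ?_
    rw [mcomm, Matrix.sub_apply, Matrix.diagonal_mul, Matrix.mul_diagonal]
    ring
  obtain ⟨c, hcdef⟩ : ∃ c' : Fin n → Fin n → ℝ,
      c' = fun i j => max ((d i - d j) ^ 2 - 1) 0 := ⟨_, rfl⟩
  have hterm : ∀ β ∈ J, frobSq (mcomm (Q α) (Q β)) - 1
      ≤ ∑ i, ∑ j, c i j * (B β i j) ^ 2 := by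
    intro β _
    have hB1 : ∑ i, ∑ j, (B β i j) ^ 2 = 1 := by
      have h := hBorth β β
      rw [if_pos rfl] at h
      rw [← h]
      exact Finset.sum_congr rfl fun i _ => Finset.sum_congr rfl fun j _ => sq (B β i j)
    calc frobSq (mcomm (Q α) (Q β)) - 1
        = ∑ i, ∑ j, ((d i - d j) ^ 2 - 1) * (B β i j) ^ 2 := by
          rw [hcommB β]
          nth_rewrite 1 [← hB1]
          rw [← Finset.sum_sub_distrib]
          refine Finset.sum_congr rfl fun i _ => ?_
          rw [← Finset.sum_sub_distrib]
          exact Finset.sum_congr rfl fun j _ => by ring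
      _ ≤ ∑ i, ∑ j, c i j * (B β i j) ^ 2 := by
          refine Finset.sum_le_sum fun i _ => Finset.sum_le_sum fun j _ => ?_
          rw [hcdef]
          exact mul_le_mul_of_nonneg_right (le_max_left _ _) (sq_nonneg _)
  obtain ⟨T, hTdef⟩ : ∃ T' : Fin n → Fin n → ℝ,
      T' = fun i j => ∑ β ∈ J, (B β i j) ^ 2 := ⟨_, rfl⟩
  have hswap : ∑ β ∈ J, ∑ i, ∑ j, c i j * (B β i j) ^ 2 = ∑ i, ∑ j, c i j * T i j := by
    rw [Finset.sum_comm]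
    refine Finset.sum_congr rfl fun i _ => ?_
    rw [Finset.sum_comm]
    refine Finset.sum_congr rfl fun j _ => ?_
    simp only [hTdef]
    exact (Finset.mul_sum _ _ _).symm
  have hbessel : ∀ i j : Fin n, i ≠ j → T i j ≤ 1 / 2 := by
    intro i j hij
    obtain ⟨x, hx⟩ : ∃ x' : Fin n × Fin n → ℝ,
      x' = fun p => (if p = (i, j) then 1 else 0) + (if p = (j, i) then 1 else 0) := ⟨_, rfl⟩
    have horthv : ∀ β ∈ J, ∀ γ ∈ J,
        (∑ p : Fin n × Fin n, B β p.1 p.2 * B γ p.1 p.2) = if β = γ then 1 else 0 := by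
      intro β _ γ _
      rw [Fintype.sum_prod_type]
      exact hBorth β γ
    have hb := bessel_aux J (fun β p => B β p.1 p.2) x horthv
    have hne : ((i, j) : Fin n × Fin n) ≠ (j, i) := by
      intro h
      exact hij (congrArg Prod.fst h)
    have hxv : ∀ β, (∑ p : Fin n × Fin n, x p * B β p.1 p.2) = 2 * B β i j := by
      intro β
      have e : ∀ p : Fin n × Fin n, x p * B β p.1 p.2
          = (if p = (i, j) then B β p.1 p.2 else 0)
            + (if p = (j, i) then B β p.1 p.2 else 0) := by
        intro p
        simp only [hx]
        split_ifs <;> ring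
      rw [Finset.sum_congr rfl fun p _ => e p, Finset.sum_add_distrib,
        Finset.sum_ite_eq' Finset.univ ((i, j) : Fin n × Fin n),
        Finset.sum_ite_eq' Finset.univ ((j, i) : Fin n × Fin n),
        if_pos (Finset.mem_univ _), if_pos (Finset.mem_univ _)]
      rw [hBsymm' β i j]
      ring
    have hxx : (∑ p : Fin n × Fin n, x p ^ 2) = 2 := by
      have e : ∀ p : Fin n × Fin n, x p ^ 2
          = (if p = (i, j) then (1:ℝ) else 0) + (if p = (j, i) then 1 else 0) := by
        intro p
        simp only [hx]
        split_ifs with h1 h2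
        · exact absurd (h1.symm.trans h2) hne
        · norm_num
        · norm_num
        · norm_num
      rw [Finset.sum_congr rfl fun p _ => e p, Finset.sum_add_distrib,
        Finset.sum_ite_eq' Finset.univ ((i, j) : Fin n × Fin n),
        Finset.sum_ite_eq' Finset.univ ((j, i) : Fin n × Fin n),
        if_pos (Finset.mem_univ _), if_pos (Finset.mem_univ _)]
      norm_num
    rw [hxx] at hb
    beta_reduce at hb
    have h4 : ∑ β ∈ J, (2 * B β i j) ^ 2 ≤ 2 := by
      calc ∑ β ∈ J, (2 * B β i j) ^ 2
          = ∑ β ∈ J, (∑ p : Fin n × Fin n, x p * B β p.1 p.2) ^ 2 :=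
            Finset.sum_congr rfl fun β _ => by rw [hxv β]
        _ ≤ 2 := hb
    have h5 : ∑ β ∈ J, (2 * B β i j) ^ 2 = 4 * T i j := by
      simp only [hTdef]
      rw [Finset.mul_sum]
      exact Finset.sum_congr rfl fun β _ => by ring
    rw [h5] at h4
    linarith
  have hc0 : ∀ i, c i i = 0 := by
    intro i
    simp only [hcdef, sub_self]
    norm_num
  have hcsymm : ∀ i j, c j i = c i j := by
    intro i j
    simp only [hcdef]
    rw [show (d j - d i) ^ 2 = (d i - d j) ^ 2 by ring]
  have hTsymm : ∀ i j, T j i = T i j := by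
    intro i j
    simp only [hTdef]
    exact Finset.sum_congr rfl fun β _ => by rw [hBsymm' β i j]
  have hcnonneg : ∀ i j, 0 ≤ c i j := by
    intro i j; rw [hcdef]; exact le_max_right _ _
  have hfinal : ∑ i, ∑ j, c i j * T i j ≤ 1 := by
    rw [← Finset.sum_product', Finset.univ_product_univ]
    obtain ⟨f, hf⟩ : ∃ f' : Fin n × Fin n → ℝ,
      f' = fun p => c p.1 p.2 * T p.1 p.2 := ⟨_, rfl⟩
    have hsplit : ∑ p : Fin n × Fin n, f p
        = ∑ p ∈ Finset.univ.filter (fun p : Fin n × Fin n => p.1 < p.2), f p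
          + ∑ p ∈ Finset.univ.filter (fun p : Fin n × Fin n => ¬ p.1 < p.2), f p :=
      (Finset.sum_filter_add_sum_filter_not _ _ _).symm
    have hsub : Finset.univ.filter (fun p : Fin n × Fin n => p.2 < p.1)
        ⊆ Finset.univ.filter (fun p : Fin n × Fin n => ¬ p.1 < p.2) := by
      intro p hp
      simp only [Finset.mem_filter, Finset.mem_univ, true_and] at *
      exact lt_asymm hp
    have h0 : ∑ p ∈ Finset.univ.filter (fun p : Fin n × Fin n => ¬ p.1 < p.2), f p
        = ∑ p ∈ Finset.univ.filter (fun p : Fin n × Fin n => p.2 < p.1), f p := by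
      refine (Finset.sum_subset hsub ?_).symm
      intro p hp hnp
      simp only [Finset.mem_filter, Finset.mem_univ, true_and] at hp hnp
      have heq : p.1 = p.2 := le_antisymm (not_lt.mp hnp) (not_lt.mp hp)
      simp only [hf]
      rw [← heq, hc0, zero_mul]
    have hswap2 : ∑ p ∈ Finset.univ.filter (fun p : Fin n × Fin n => p.2 < p.1), f p
        = ∑ p ∈ Finset.univ.filter (fun p : Fin n × Fin n => p.1 < p.2), f p := by
      refine Finset.sum_nbij' (fun p => Prod.swap p) (fun p => Prod.swap p) ?_ ?_ ?_ ?_ ?_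
      · intro p hp
        simp only [Finset.mem_filter, Finset.mem_univ, true_and] at *
        exact hp
      · intro p hp
        simp only [Finset.mem_filter, Finset.mem_univ, true_and] at *
        exact hp
      · intro p _; exact Prod.swap_swap p
      · intro p _; exact Prod.swap_swap p
      · intro p _
        simp only [hf, Prod.fst_swap, Prod.snd_swap]
        rw [hcsymm, hTsymm]
    have hhalf : ∑ p ∈ Finset.univ.filter (fun p : Fin n × Fin n => p.1 < p.2), f p
        ≤ ∑ p ∈ Finset.univ.filter (fun p : Fin n × Fin n => p.1 < p.2),
            (1 / 2) * c p.1 p.2 := by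
      refine Finset.sum_le_sum fun p hp => ?_
      simp only [Finset.mem_filter, Finset.mem_univ, true_and] at hp
      simp only [hf]
      calc c p.1 p.2 * T p.1 p.2 ≤ c p.1 p.2 * (1 / 2) :=
            mul_le_mul_of_nonneg_left (hbessel p.1 p.2 (ne_of_lt hp)) (hcnonneg _ _)
        _ = (1 / 2) * c p.1 p.2 := by ring
    have hstar2 : ∑ p ∈ Finset.univ.filter (fun p : Fin n × Fin n => p.1 < p.2),
        c p.1 p.2 ≤ 1 := by
      have := star_ineq d hd2
      simpa [hcdef] using this
    have hgoal : ∑ x : Fin n × Fin n, c x.1 x.2 * T x.1 x.2 = ∑ p : Fin n × Fin n, f p :=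
      Finset.sum_congr rfl fun p _ => by rw [hf]
    rw [hgoal, hsplit, h0, hswap2]
    have : ∑ p ∈ Finset.univ.filter (fun p : Fin n × Fin n => p.1 < p.2),
        (1 / 2) * c p.1 p.2 = (1 / 2) * ∑ p ∈ Finset.univ.filter
          (fun p : Fin n × Fin n => p.1 < p.2), c p.1 p.2 := by
      rw [Finset.mul_sum]
    linarith [hhalf, hstar2, this]
  calc ∑ β ∈ J, (frobSq (mcomm (Q α) (Q β)) - 1)
      ≤ ∑ β ∈ J, ∑ i, ∑ j, c i j * (B β i j) ^ 2 := Finset.sum_le_sum hterm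
    _ = ∑ i, ∑ j, c i j * T i j := hswap
    _ ≤ 1 := hfinal
end

section
/- Let n ≥ 1 and N = n(n+1)/2, let {Ê_α}_{α∈S} be the standard orthonormal basis of SM(n) indexed by S = {(i,j) : 1 ≤ i ≤ j ≤ n} (Ê_{ij} = E_{ii} if i = j, Ê_{ij} = (E_{ij}+E_{ji})/√2 if i < j), and let x_α > 0 for all α ∈ S. Then Σ_{α,β∈S} x_α x_β ‖[Ê_α, Ê_β]‖² < (Σ_{α∈S} x_α)². -/
open Matrix BigOperators

/-- The standard orthonormal basis element `Ê_{ij}` of the space of symmetric matrices: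
`Ê_{ii} = E_{ii}` and `Ê_{ij} = (E_{ij} + E_{ji})/√2` for `i ≠ j`. -/
noncomputable def Ehat {n : ℕ} (i j : Fin n) : Matrix (Fin n) (Fin n) ℝ :=
  if i = j then Matrix.single i i (1 : ℝ)
  else (1 / Real.sqrt 2) •
    (Matrix.single i j (1 : ℝ) + Matrix.single j i (1 : ℝ))

lemma frobSq_zero {n : ℕ} : frobSq (0 : Matrix (Fin n) (Fin n) ℝ) = 0 := by simp [frobSq]

lemma frobSq_neg {n : ℕ} (A : Matrix (Fin n) (Fin n) ℝ) : frobSq (-A) = frobSq A := by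
  simp [frobSq]

lemma mcomm_self {n : ℕ} (A : Matrix (Fin n) (Fin n) ℝ) : mcomm A A = 0 := by simp [mcomm]

lemma mcomm_swap {n : ℕ} (A B : Matrix (Fin n) (Fin n) ℝ) : mcomm B A = -(mcomm A B) := by
  simp [mcomm]

lemma Ehat_symm {n : ℕ} (i j : Fin n) : Ehat i j = Ehat j i := by
  by_cases h : i = j
  · subst h; rfl
  · simp only [Ehat, if_neg h, if_neg (Ne.symm h)]
    rw [add_comm]

lemma sum_entries_std {n : ℕ} (a b : Fin n) :
    ∑ x, ∑ y, Matrix.single a b (1:ℝ) x y = 1 := by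
  simp [Matrix.single, ite_and, Finset.sum_ite_eq]

lemma frobSq_pair {n : ℕ} (a b : Fin n) (h : a ≠ b) (c d : ℝ) :
    frobSq (c • Matrix.single a b (1:ℝ) + d • Matrix.single b a (1:ℝ)) = c^2 + d^2 := by
  have he : ∀ x y : Fin n,
      ((c • Matrix.single a b (1:ℝ) + d • Matrix.single b a (1:ℝ)) x y)^2
      = c^2 * Matrix.single a b (1:ℝ) x y + d^2 * Matrix.single b a (1:ℝ) x y := by
    intro x y
    simp only [Matrix.add_apply, Matrix.smul_apply, smul_eq_mul, Matrix.single,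
      Matrix.of_apply]
    by_cases h1 : a = x ∧ b = y
    · obtain ⟨rfl, rfl⟩ := h1
      simp [h, Ne.symm h]
    · by_cases h2 : b = x ∧ a = y
      · obtain ⟨rfl, rfl⟩ := h2
        simp [h, Ne.symm h]
      · simp [h1, h2]
  simp only [frobSq, he, Finset.sum_add_distrib, ← Finset.mul_sum, sum_entries_std]
  ring

lemma frobSq_pair' {n : ℕ} (a b : Fin n) (h : a ≠ b) (c : ℝ) :
    frobSq (c • (Matrix.single a b (1:ℝ) - Matrix.single b a (1:ℝ))) = 2 * c^2 := by
  have he : c • (Matrix.single a b (1:ℝ) - Matrix.single b a (1:ℝ))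
      = c • Matrix.single a b (1:ℝ) + (-c) • Matrix.single b a (1:ℝ) := by module
  rw [he, frobSq_pair a b h]; ring

lemma sqrt2_fact : ((1 : ℝ) / Real.sqrt 2) ^ 2 = 1/2 := by
  rw [div_pow, one_pow, Real.sq_sqrt (by norm_num : (0:ℝ) ≤ 2)]

/-- diagonal basis element vs off-diagonal basis element. -/
lemma key_diag_off {n : ℕ} (i k l : Fin n) (hkl : k ≠ l) :
    frobSq (mcomm (Ehat i i) (Ehat k l)) ≤ 1 := by
  by_cases hik : i = k
  · subst hik
    have hil : i ≠ l := hkl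
    have hm : mcomm (Ehat i i) (Ehat i l) = (1 / Real.sqrt 2) •
        (Matrix.single i l (1:ℝ) - Matrix.single l i (1:ℝ)) := by
      simp only [Ehat, if_pos rfl, if_neg hil, mcomm, Matrix.mul_smul, Matrix.smul_mul,
        mul_add, add_mul, Matrix.single_mul_single_same, Matrix.single_mul_single_of_ne,
        hil, Ne.symm hil, ne_eq, not_false_iff, one_mul, if_true, if_false]
      module
    rw [hm, frobSq_pair' _ _ hil, sqrt2_fact]; norm_num
  · by_cases hil : i = l
    · subst hil
      have hm : mcomm (Ehat i i) (Ehat k i) = (1 / Real.sqrt 2) •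
          (Matrix.single i k (1:ℝ) - Matrix.single k i (1:ℝ)) := by
        simp only [Ehat, if_pos rfl, if_neg hkl, mcomm, Matrix.mul_smul, Matrix.smul_mul,
          mul_add, add_mul, Matrix.single_mul_single_same, Matrix.single_mul_single_of_ne,
          hik, Ne.symm hik, ne_eq, not_false_iff, one_mul, if_true, if_false]
        module
      rw [hm, frobSq_pair' _ _ hik, sqrt2_fact]; norm_num
    · have hm : mcomm (Ehat i i) (Ehat k l) = 0 := by
        simp only [Ehat, if_pos rfl, if_neg hkl, mcomm, Matrix.mul_smul, Matrix.smul_mul,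
          mul_add, add_mul, Matrix.single_mul_single_of_ne,
          hik, Ne.symm hik, hil, Ne.symm hil, ne_eq, not_false_iff, if_true, if_false]
        module
      rw [hm, frobSq_zero]; norm_num

/-- off-diagonal vs off-diagonal. -/
lemma key_off_off {n : ℕ} (i j k l : Fin n) (hij : i ≠ j) (hkl : k ≠ l) :
    frobSq (mcomm (Ehat i j) (Ehat k l)) ≤ 1 := by
  have hhalf : ((1:ℝ) / Real.sqrt 2 * (1 / Real.sqrt 2)) = 1/2 := by
    rw [div_mul_div_comm, one_mul, Real.mul_self_sqrt (by norm_num : (0:ℝ) ≤ 2)]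
  by_cases hik : i = k
  · subst hik
    by_cases hjl : j = l
    · subst hjl
      rw [mcomm_self, frobSq_zero]; norm_num
    · -- share at i : (1/2)(E_{jl} - E_{lj})
      have hm : mcomm (Ehat i j) (Ehat i l) = ((1 / Real.sqrt 2) * (1 / Real.sqrt 2)) •
          (Matrix.single j l (1:ℝ) - Matrix.single l j (1:ℝ)) := by
        simp only [Ehat, if_neg hij, if_neg hkl, mcomm, Matrix.mul_smul, Matrix.smul_mul,
          smul_smul, mul_add, add_mul, Matrix.single_mul_single_same, Matrix.single_mul_single_of_ne,
          hij, Ne.symm hij, hkl, Ne.symm hkl, hjl, Ne.symm hjl,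
          ne_eq, not_false_iff, one_mul, if_true, if_false]
        module
      rw [hm, frobSq_pair' _ _ hjl, hhalf]; norm_num
  · by_cases hil : i = l
    · subst hil
      by_cases hjk : j = k
      · subst hjk
        rw [Ehat_symm j i, mcomm_self, frobSq_zero]; norm_num
      · -- share at i = l : (1/2)(E_{jk} - E_{kj})
        have hm : mcomm (Ehat i j) (Ehat k i) = ((1 / Real.sqrt 2) * (1 / Real.sqrt 2)) •
            (Matrix.single j k (1:ℝ) - Matrix.single k j (1:ℝ)) := by
          simp only [Ehat, if_neg hij, if_neg hkl, mcomm, Matrix.mul_smul, Matrix.smul_mul,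
            smul_smul, mul_add, add_mul, Matrix.single_mul_single_same, Matrix.single_mul_single_of_ne,
            hij, Ne.symm hij, hkl, Ne.symm hkl, hik, Ne.symm hik, hjk, Ne.symm hjk,
            ne_eq, not_false_iff, one_mul, if_true, if_false]
          module
        rw [hm, frobSq_pair' _ _ hjk, hhalf]; norm_num
    · by_cases hjk : j = k
      · subst hjk
        -- share at j : (1/2)(E_{il} - E_{li})
        have hm : mcomm (Ehat i j) (Ehat j l) = ((1 / Real.sqrt 2) * (1 / Real.sqrt 2)) •
            (Matrix.single i l (1:ℝ) - Matrix.single l i (1:ℝ)) := by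
          simp only [Ehat, if_neg hij, if_neg hkl, mcomm, Matrix.mul_smul, Matrix.smul_mul,
            smul_smul, mul_add, add_mul, Matrix.single_mul_single_same, Matrix.single_mul_single_of_ne,
            hij, Ne.symm hij, hkl, Ne.symm hkl, hil, Ne.symm hil,
            ne_eq, not_false_iff, one_mul, if_true, if_false]
          module
        rw [hm, frobSq_pair' _ _ hil, hhalf]; norm_num
      · by_cases hjl : j = l
        · subst hjl
          -- share at j = l : (1/2)(E_{ik} - E_{ki})
          have hm : mcomm (Ehat i j) (Ehat k j) = ((1 / Real.sqrt 2) * (1 / Real.sqrt 2)) •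
              (Matrix.single i k (1:ℝ) - Matrix.single k i (1:ℝ)) := by
            simp only [Ehat, if_neg hij, if_neg hkl, mcomm, Matrix.mul_smul, Matrix.smul_mul,
              smul_smul, mul_add, add_mul, Matrix.single_mul_single_same, Matrix.single_mul_single_of_ne,
              hij, Ne.symm hij, hkl, Ne.symm hkl, hik, Ne.symm hik, hjk, Ne.symm hjk,
              ne_eq, not_false_iff, one_mul, if_true, if_false]
            module
          rw [hm, frobSq_pair' _ _ hik, hhalf]; norm_num
        · -- disjoint
          have hm : mcomm (Ehat i j) (Ehat k l) = 0 := by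
            simp only [Ehat, if_neg hij, if_neg hkl, mcomm, Matrix.mul_smul, Matrix.smul_mul,
              smul_smul, mul_add, add_mul, Matrix.single_mul_single_of_ne,
              hik, Ne.symm hik, hil, Ne.symm hil, hjk, Ne.symm hjk, hjl, Ne.symm hjl,
              ne_eq, not_false_iff, if_true, if_false]
            module
          rw [hm, frobSq_zero]; norm_num

/-- The main estimate: every pair of basis elements has `‖[Ê_α,Ê_β]‖² ≤ 1`. -/
lemma key_le_one {n : ℕ} (i j k l : Fin n) :
    frobSq (mcomm (Ehat i j) (Ehat k l)) ≤ 1 := by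
  by_cases hij : i = j
  · subst hij
    by_cases hkl : k = l
    · subst hkl
      by_cases hik : i = k
      · subst hik; rw [mcomm_self, frobSq_zero]; norm_num
      · have hm : mcomm (Ehat i i) (Ehat k k) = 0 := by
          simp only [Ehat, if_pos rfl, mcomm, Matrix.single_mul_single_of_ne,
            hik, Ne.symm hik, ne_eq, not_false_iff, if_true]
          simp
        rw [hm, frobSq_zero]; norm_num
    · exact key_diag_off i k l hkl
  · by_cases hkl : k = l
    · subst hkl
      rw [mcomm_swap, frobSq_neg]
      exact key_diag_off k i j hij
    · exact key_off_off i j k l hij hkl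

/-- Step 1 of the continuity method: for the standard basis `{Ê_α}_{α∈S}`,
`S = {(i,j) : i ≤ j}`, and any strictly positive weights `x_α`,
`∑_{α,β∈S} x_α x_β ‖[Ê_α, Ê_β]‖² < (∑_{α∈S} x_α)²`. -/
theorem strict_inequality_standard_basis (n : ℕ) (hn : 1 ≤ n)
    (x : Fin n × Fin n → ℝ)
    (hx : ∀ p : Fin n × Fin n, p.1 ≤ p.2 → 0 < x p) :
    ∑ p ∈ Finset.univ.filter (fun p : Fin n × Fin n => p.1 ≤ p.2),
      ∑ q ∈ Finset.univ.filter (fun q : Fin n × Fin n => q.1 ≤ q.2),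
        x p * x q * frobSq (mcomm (Ehat p.1 p.2) (Ehat q.1 q.2)) <
      (∑ p ∈ Finset.univ.filter (fun p : Fin n × Fin n => p.1 ≤ p.2), x p) ^ 2 := by
  classical
  set S := Finset.univ.filter (fun p : Fin n × Fin n => p.1 ≤ p.2) with hS
  have hxS : ∀ p ∈ S, 0 < x p := by
    intro p hp
    exact hx p (Finset.mem_filter.mp hp).2
  have hne : S.Nonempty := ⟨(⟨0, hn⟩, ⟨0, hn⟩), by simp [hS]⟩
  rw [sq, Finset.sum_mul_sum]
  apply Finset.sum_lt_sum_of_nonempty hne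
  intro p hp
  apply Finset.sum_lt_sum
  · intro q hq
    have h0 : (0:ℝ) ≤ x p * x q := le_of_lt (mul_pos (hxS p hp) (hxS q hq))
    have hc := key_le_one p.1 p.2 q.1 q.2
    calc x p * x q * frobSq (mcomm (Ehat p.1 p.2) (Ehat q.1 q.2))
        ≤ x p * x q * 1 := mul_le_mul_of_nonneg_left hc h0
      _ = x p * x q := mul_one _
  · refine ⟨p, hp, ?_⟩
    rw [mcomm_self, frobSq_zero, mul_zero]
    exact mul_pos (hxS p hp) (hxS p hp)
end
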